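/- Let f, g, h, k be positive integers satisfying 2gh = k(2f + h), and let n ≥ 1. Then the finite continued fraction [0; f, g, f+h, g+k, f+2h, g+2k, ..., f+(n-1)h, g+(n-1)k] equals (\sum_{i=1}^{n} \binom{2n-i}{i-1} (2g/(2f+h))^{2n-i} \prod_{j=i}^{2n-i}(f + j h/2)) / (\sum_{i=0}^{n} \binom{2n-i}{i} (2g/(2f+h))^{2n-1-i} \prod_{j=i}^{2n-1-i}(f + j h/2)). -/

import Mathlib

open Finset

lemma prodShift (F H : ℚ) (s t : ℕ) :
    (∏ j ∈ Finset.Icc s t, ((F + H) + (j:ℚ)*H/2)) =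
    ∏ j ∈ Finset.Icc (s+2) (t+2), (F + (j:ℚ)*H/2) := by
  rw [← Finset.map_add_right_Icc s t 2, Finset.prod_map]
  refine Finset.prod_congr rfl fun j _ => ?_
  simp only [addRightEmbedding_apply]
  push_cast
  ring

lemma prodBot (f : ℕ → ℚ) (s t : ℕ) (h : s ≤ t) :
    ∏ j ∈ Finset.Icc s t, f j = f s * ∏ j ∈ Finset.Icc (s+1) t, f j := by
  rw [← Finset.Ico_add_one_right_eq_Icc, ← Finset.Ico_add_one_right_eq_Icc,
    Finset.prod_eq_prod_Ico_succ_bot (show s < t + 1 from Nat.lt_succ_of_le h)]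

lemma prodTop (f : ℕ → ℚ) (s t : ℕ) (h : s ≤ t+1) :
    ∏ j ∈ Finset.Icc s (t+1), f j = (∏ j ∈ Finset.Icc s t, f j) * f (t+1) := by
  rw [← Finset.Ico_add_one_right_eq_Icc, ← Finset.Ico_add_one_right_eq_Icc, Finset.prod_Ico_succ_top h]

lemma key (F H : ℚ) (p i : ℕ) (h1 : 1 ≤ i) (h2 : i ≤ p) :
    ((p+1).choose i : ℚ) * (F + (i:ℚ)*H/2)
      = (p.choose i : ℚ) * F + (p.choose (i-1) : ℚ) * (F + ((p:ℚ)+1)*H/2) := by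
  obtain ⟨j, rfl⟩ : ∃ j, i = j + 1 := ⟨i-1, by omega⟩
  simp only [Nat.add_sub_cancel]
  have hpas : (((p+1).choose (j+1) : ℕ) : ℚ) = (p.choose j : ℚ) + (p.choose (j+1) : ℚ) := by
    rw [Nat.choose_succ_succ']; push_cast; ring
  have hp : (p.choose (j+1) : ℚ) * ((j:ℚ)+1) = (p.choose j : ℚ) * ((p:ℚ) - j) := by
    have h := Nat.choose_succ_right_eq p j
    have hc : ((p - j : ℕ) : ℚ) = (p:ℚ) - (j:ℚ) := by
      have : j ≤ p := by omega
      push_cast [this]; ring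
    calc (p.choose (j+1) : ℚ) * ((j:ℚ)+1) = ((p.choose (j+1) * (j+1) : ℕ) : ℚ) := by push_cast; ring
      _ = ((p.choose j * (p - j) : ℕ) : ℚ) := by rw [h]
      _ = (p.choose j : ℚ) * ((p:ℚ) - j) := by push_cast [hc]; try ring
  push_cast
  linear_combination (F + ((j:ℚ)+1)*H/2) * hpas + (H/2) * hp

lemma sumN_succ (F H X : ℚ) (n : ℕ) (hn : 1 ≤ n) :
    (∑ i ∈ Finset.Icc 1 (n+1), ((2*(n+1)-i).choose (i-1) : ℚ) * X^(2*(n+1)-i) *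
        ∏ j ∈ Finset.Icc i (2*(n+1)-i), (F + (j:ℚ)*H/2))
    = X * ((X*(F+H/2)) *
        (∑ i ∈ Finset.range (n+1), ((2*n-i).choose i : ℚ) * X^(2*n-1-i) *
          ∏ j ∈ Finset.Icc i (2*n-1-i), ((F+H) + (j:ℚ)*H/2))
      + ∑ i ∈ Finset.Icc 1 n, ((2*n-i).choose (i-1) : ℚ) * X^(2*n-i) *
          ∏ j ∈ Finset.Icc i (2*n-i), ((F+H) + (j:ℚ)*H/2)) := by
  rw [← Finset.Ico_add_one_right_eq_Icc 1 (n+1), Finset.sum_Ico_eq_sum_range]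
  rw [← Finset.Ico_add_one_right_eq_Icc 1 n, Finset.sum_Ico_eq_sum_range]
  have e1 : n + 1 + 1 - 1 = n + 1 := by omega
  have e2 : n + 1 - 1 = n := by omega
  rw [e1, e2, Finset.sum_range_succ' (fun k => ((2*(n+1)-(1+k)).choose ((1+k)-1) : ℚ) * X^(2*(n+1)-(1+k)) *
        ∏ j ∈ Finset.Icc (1+k) (2*(n+1)-(1+k)), (F + (j:ℚ)*H/2)) n,
     Finset.sum_range_succ' (fun i => ((2*n-i).choose i : ℚ) * X^(2*n-1-i) *
          ∏ j ∈ Finset.Icc i (2*n-1-i), ((F+H) + (j:ℚ)*H/2)) n]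
  have hterm : ∀ k ∈ Finset.range n,
      ((2 * (n + 1) - (1 + (k + 1))).choose (1 + (k + 1) - 1) : ℚ) * X ^ (2 * (n + 1) - (1 + (k + 1))) *
        ∏ j ∈ Finset.Icc (1 + (k + 1)) (2 * (n + 1) - (1 + (k + 1))), (F + (j:ℚ) * H / 2)
      = X * (X * (F + H / 2) *
          (((2 * n - (k + 1)).choose (k + 1) : ℚ) * X ^ (2 * n - 1 - (k + 1)) *
            ∏ j ∈ Finset.Icc (k + 1) (2 * n - 1 - (k + 1)), (F + H + (j:ℚ) * H / 2)))
        + X * (((2 * n - (1 + k)).choose (1 + k - 1) : ℚ) * X ^ (2 * n - (1 + k)) *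
            ∏ j ∈ Finset.Icc (1 + k) (2 * n - (1 + k)), (F + H + (j:ℚ) * H / 2)) := by
    intro k hk
    rw [Finset.mem_range] at hk
    obtain ⟨d, rfl⟩ : ∃ d, n = k + 1 + d := ⟨n - (k+1), by omega⟩
    rw [show 2 * (k+1+d+1) - (1+(k+1)) = k + 2*d + 2 by omega,
        show 1 + (k+1) - 1 = k + 1 by omega,
        show 1 + (k+1) = k + 2 by omega,
        show 2 * (k+1+d) - (k+1) = k + 2*d + 1 by omega,
        show 2 * (k+1+d) - 1 - (k+1) = k + 2*d by omega,
        show 1 + k - 1 = k by omega,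
        show 2 * (k+1+d) - (1+k) = k + 2*d + 1 by omega,
        show 1 + k = k + 1 by omega]
    rw [prodShift F H (k+1) (k+2*d), prodShift F H (k+1) (k+2*d+1),
        show k+1+2 = k+3 by omega, show k+2*d+2 = k+2*d+2 by omega,
        show k+2*d+1+2 = (k+2*d+2)+1 by omega]
    rw [prodBot (fun j => F + (j:ℚ)*H/2) (k+2) (k+2*d+2) (by omega),
        show k+2+1 = k+3 by omega,
        prodTop (fun j => F + (j:ℚ)*H/2) (k+3) (k+2*d+2) (by omega)]
    have hkey := key (F+H/2) H (k+2*d+1) (k+1) (by omega) (by omega)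
    rw [show k+2*d+1+1 = k+2*d+2 by omega, show k+1-1 = k by omega] at hkey
    push_cast at hkey ⊢
    linear_combination (X^(k+2*d+2) * (∏ j ∈ Finset.Icc (k+3) (k+2*d+2), (F + (j:ℚ)*H/2))) * hkey
  have h0 : ((2 * (n + 1) - (1 + 0)).choose (1 + 0 - 1) : ℚ) * X ^ (2 * (n + 1) - (1 + 0)) *
        ∏ j ∈ Finset.Icc (1 + 0) (2 * (n + 1) - (1 + 0)), (F + (j:ℚ) * H / 2)
      = X * (X * (F + H / 2) *
          (((2 * n - 0).choose 0 : ℚ) * X ^ (2 * n - 1 - 0) *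
            ∏ j ∈ Finset.Icc 0 (2 * n - 1 - 0), (F + H + (j:ℚ) * H / 2))) := by
    obtain ⟨m, rfl⟩ : ∃ m, n = m + 1 := ⟨n - 1, by omega⟩
    rw [show 2 * (m+1+1) - (1+0) = 2*m + 3 by omega,
        show 1 + 0 - 1 = 0 by omega,
        show 1 + 0 = 1 by omega,
        show 2 * (m+1) - 0 = 2*m + 2 by omega,
        show 2 * (m+1) - 1 - 0 = 2*m + 1 by omega]
    rw [prodShift F H 0 (2*m+1), show (0:ℕ)+2 = 2 by omega, show 2*m+1+2 = 2*m+3 by omega]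
    rw [prodBot (fun j => F + (j:ℚ)*H/2) 1 (2*m+3) (by omega), show (1:ℕ)+1 = 2 by omega]
    simp only [Nat.choose_zero_right]
    push_cast
    ring
  rw [Finset.sum_congr rfl hterm, h0, Finset.sum_add_distrib]
  simp only [← Finset.mul_sum]
  ring
open Finset

lemma sumD_succ (F H X : ℚ) (n : ℕ) (hn : 1 ≤ n) :
    (∑ i ∈ Finset.range (n+2), ((2*(n+1)-i).choose i : ℚ) * X^(2*(n+1)-1-i) *
        ∏ j ∈ Finset.Icc i (2*(n+1)-1-i), (F + (j:ℚ)*H/2))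
    = F * (∑ i ∈ Finset.Icc 1 (n+1), ((2*(n+1)-i).choose (i-1) : ℚ) * X^(2*(n+1)-i) *
        ∏ j ∈ Finset.Icc i (2*(n+1)-i), (F + (j:ℚ)*H/2))
    + X * (∑ i ∈ Finset.range (n+1), ((2*n-i).choose i : ℚ) * X^(2*n-1-i) *
        ∏ j ∈ Finset.Icc i (2*n-1-i), ((F+H) + (j:ℚ)*H/2)) := by
  rw [Finset.sum_range_succ (fun i => ((2*(n+1)-i).choose i : ℚ) * X^(2*(n+1)-1-i) *
        ∏ j ∈ Finset.Icc i (2*(n+1)-1-i), (F + (j:ℚ)*H/2)) (n+1),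
     Finset.sum_range_succ' (fun i => ((2*(n+1)-i).choose i : ℚ) * X^(2*(n+1)-1-i) *
        ∏ j ∈ Finset.Icc i (2*(n+1)-1-i), (F + (j:ℚ)*H/2)) n]
  rw [← Finset.Ico_add_one_right_eq_Icc 1 (n+1), Finset.sum_Ico_eq_sum_range]
  have e1 : n + 1 + 1 - 1 = n + 1 := by omega
  rw [e1, Finset.sum_range_succ' (fun k => ((2*(n+1)-(1+k)).choose ((1+k)-1) : ℚ) * X^(2*(n+1)-(1+k)) *
        ∏ j ∈ Finset.Icc (1+k) (2*(n+1)-(1+k)), (F + (j:ℚ)*H/2)) n,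
     Finset.sum_range_succ (fun i => ((2*n-i).choose i : ℚ) * X^(2*n-1-i) *
        ∏ j ∈ Finset.Icc i (2*n-1-i), ((F+H) + (j:ℚ)*H/2)) n]
  have hterm : ∀ k ∈ Finset.range n,
      ((2 * (n + 1) - (k + 1)).choose (k + 1) : ℚ) * X ^ (2 * (n + 1) - 1 - (k + 1)) *
        ∏ j ∈ Finset.Icc (k + 1) (2 * (n + 1) - 1 - (k + 1)), (F + (j:ℚ) * H / 2)
      = F * (((2 * (n + 1) - (1 + (k + 1))).choose (1 + (k + 1) - 1) : ℚ) * X ^ (2 * (n + 1) - (1 + (k + 1))) *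
          ∏ j ∈ Finset.Icc (1 + (k + 1)) (2 * (n + 1) - (1 + (k + 1))), (F + (j:ℚ) * H / 2))
        + X * (((2 * n - k).choose k : ℚ) * X ^ (2 * n - 1 - k) *
          ∏ j ∈ Finset.Icc k (2 * n - 1 - k), (F + H + (j:ℚ) * H / 2)) := by
    intro k hk
    rw [Finset.mem_range] at hk
    obtain ⟨d, rfl⟩ : ∃ d, n = k + 1 + d := ⟨n - (k+1), by omega⟩
    rw [show 2 * (k+1+d+1) - (k+1) = k + 2*d + 3 by omega,
        show 2 * (k+1+d+1) - 1 - (k+1) = k + 2*d + 2 by omega,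
        show 2 * (k+1+d+1) - (1+(k+1)) = k + 2*d + 2 by omega,
        show 1 + (k+1) - 1 = k + 1 by omega,
        show 1 + (k+1) = k + 2 by omega,
        show 2 * (k+1+d) - k = k + 2*d + 2 by omega,
        show 2 * (k+1+d) - 1 - k = k + 2*d + 1 by omega]
    rw [prodShift F H k (k+2*d+1), show k+2 = k+2 from rfl,
        show k+2*d+1+2 = (k+2*d+2)+1 by omega]
    rw [prodBot (fun j => F + (j:ℚ)*H/2) (k+1) (k+2*d+2) (by omega),
        show k+1+1 = k+2 by omega,
        prodTop (fun j => F + (j:ℚ)*H/2) (k+2) (k+2*d+2) (by omega)]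
    have hkey := key F H (k+2*d+2) (k+1) (by omega) (by omega)
    rw [show k+2*d+2+1 = k+2*d+3 by omega, show k+1-1 = k by omega] at hkey
    push_cast at hkey ⊢
    linear_combination (X^(k+2*d+2) * (∏ j ∈ Finset.Icc (k+2) (k+2*d+2), (F + (j:ℚ)*H/2))) * hkey
  have h0 : ((2 * (n + 1) - 0).choose 0 : ℚ) * X ^ (2 * (n + 1) - 1 - 0) *
        ∏ j ∈ Finset.Icc 0 (2 * (n + 1) - 1 - 0), (F + (j:ℚ) * H / 2)
      = F * (((2 * (n + 1) - (1 + 0)).choose (1 + 0 - 1) : ℚ) * X ^ (2 * (n + 1) - (1 + 0)) *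
          ∏ j ∈ Finset.Icc (1 + 0) (2 * (n + 1) - (1 + 0)), (F + (j:ℚ) * H / 2)) := by
    rw [show 2 * (n+1) - 0 = 2*n + 2 by omega,
        show 2 * (n+1) - 1 - 0 = 2*n+1 by omega,
        show 2 * (n+1) - (1+0) = 2*n+1 by omega,
        show 1 + 0 - 1 = 0 by omega,
        show 1 + 0 = 1 by omega]
    rw [prodBot (fun j => F + (j:ℚ)*H/2) 0 (2*n+1) (by omega), show (0:ℕ)+1 = 1 by omega]
    simp only [Nat.choose_zero_right]
    push_cast
    ring
  have htop : ((2 * (n + 1) - (n + 1)).choose (n + 1) : ℚ) * X ^ (2 * (n + 1) - 1 - (n + 1)) *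
        ∏ j ∈ Finset.Icc (n + 1) (2 * (n + 1) - 1 - (n + 1)), (F + (j:ℚ) * H / 2)
      = X * (((2 * n - n).choose n : ℚ) * X ^ (2 * n - 1 - n) *
          ∏ j ∈ Finset.Icc n (2 * n - 1 - n), (F + H + (j:ℚ) * H / 2)) := by
    obtain ⟨m, rfl⟩ : ∃ m, n = m + 1 := ⟨n - 1, by omega⟩
    rw [show 2 * (m+1+1) - (m+1+1) = m+2 by omega,
        show 2 * (m+1+1) - 1 - (m+1+1) = m+1 by omega,
        show 2 * (m+1) - (m+1) = m+1 by omega,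
        show 2 * (m+1) - 1 - (m+1) = m by omega]
    rw [Finset.Icc_eq_empty (by omega : ¬ (m+1+1 : ℕ) ≤ m+1),
        Finset.Icc_eq_empty (by omega : ¬ (m+1 : ℕ) ≤ m),
        Finset.prod_empty, Nat.choose_self, Nat.choose_self]
    push_cast
    ring
  rw [Finset.sum_congr rfl hterm, h0, htop, Finset.sum_add_distrib]
  simp only [← Finset.mul_sum]
  ring

lemma sumN_pos (F H X : ℚ) (hF : 0 < F) (hH : 0 < H) (hX : 0 < X) (n : ℕ) (hn : 1 ≤ n) :
    0 < ∑ i ∈ Finset.Icc 1 n, ((2*n-i).choose (i-1) : ℚ) * X^(2*n-i) *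
        ∏ j ∈ Finset.Icc i (2*n-i), (F + (j:ℚ)*H/2) := by
  apply Finset.sum_pos
  · intro i hi
    rw [Finset.mem_Icc] at hi
    have hc : (0:ℚ) < ((2*n-i).choose (i-1) : ℚ) := by
      exact_mod_cast Nat.choose_pos (by omega)
    have hp : 0 < ∏ j ∈ Finset.Icc i (2*n-i), (F + (j:ℚ)*H/2) :=
      Finset.prod_pos (fun j _ => by positivity)
    have := pow_pos hX (2*n-i)
    positivity
  · exact ⟨1, Finset.mem_Icc.mpr ⟨le_refl 1, hn⟩⟩

lemma sumD_pos (F H X : ℚ) (hF : 0 < F) (hH : 0 < H) (hX : 0 < X) (n : ℕ) :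
    0 < ∑ i ∈ Finset.range (n+1), ((2*n-i).choose i : ℚ) * X^(2*n-1-i) *
        ∏ j ∈ Finset.Icc i (2*n-1-i), (F + (j:ℚ)*H/2) := by
  apply Finset.sum_pos
  · intro i hi
    rw [Finset.mem_range] at hi
    have hc : (0:ℚ) < ((2*n-i).choose i : ℚ) := by
      exact_mod_cast Nat.choose_pos (by omega)
    have hp : 0 < ∏ j ∈ Finset.Icc i (2*n-1-i), (F + (j:ℚ)*H/2) :=
      Finset.prod_pos (fun j _ => by positivity)
    have := pow_pos hX (2*n-1-i)
    positivity
  · exact ⟨0, Finset.mem_range.mpr (by omega)⟩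

lemma assemble (F G X P Q : ℚ) (hF : 0 < F) (hG : 0 < G) (hX : 0 < X) (hP : 0 < P) (hQ : 0 < Q) :
    1/(F + 1/(G + P/Q)) = X*(G*Q + P) / (F*(X*(G*Q + P)) + X*Q) := by
  rw [show F*(X*(G*Q+P)) + X*Q = X*(F*(G*Q+P) + Q) by ring,
      mul_div_mul_left _ _ (ne_of_gt hX)]
  have h1 : 0 < G + P/Q := by positivity
  have h2 : 0 < F + 1/(G + P/Q) := by positivity
  have h3 : 0 < F*(G*Q+P) + Q := by positivity
  rw [one_div, eq_div_iff (ne_of_gt h3), inv_mul_eq_div, div_eq_iff (ne_of_gt h2)]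
  field_simp
  try ring


/-- The value of the finite regular continued fraction `[0; c₁, ..., cₙ]`. -/
def cfVal : List ℚ → ℚ
  | [] => 0
  | x :: t => 1 / (x + cfVal t)

theorem stmt18 (f g h k : ℕ) (hf : 0 < f) (hg : 0 < g) (hh : 0 < h) (hk : 0 < k)
    (hcond : 2*g*h = k*(2*f + h)) (n : ℕ) (hn : 1 ≤ n) :
    cfVal ((List.range n).flatMap
        (fun i => [(f : ℚ) + (i : ℚ) * h, (g : ℚ) + (i : ℚ) * k])) =
      (∑ i ∈ Finset.Icc 1 n, ((2*n-i).choose (i-1) : ℚ) *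
          (2*(g : ℚ)/(2*(f : ℚ) + h))^(2*n-i) *
          ∏ j ∈ Finset.Icc i (2*n-i), ((f : ℚ) + (j : ℚ) * h / 2)) /
      (∑ i ∈ Finset.range (n+1), ((2*n-i).choose i : ℚ) *
          (2*(g : ℚ)/(2*(f : ℚ) + h))^(2*n-1-i) *
          ∏ j ∈ Finset.Icc i (2*n-1-i), ((f : ℚ) + (j : ℚ) * h / 2)) := by
  rw [show ∀ l : List ℕ, (l >>= fun a : ℕ => (pure (a:ℚ) : List ℚ)) = l.map (fun a : ℕ => (a:ℚ)) from fun l => by induction l with | nil => rfl | cons x t ih => simp; exact ih]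
  simp only [List.flatMap_map, Function.comp_def]
  revert f g k hf hg hk hcond hn
  induction n with
  | zero => intro f g k hf hg hk hcond hn; omega
  | succ n IH =>
    intro f g k hf hg hk hcond hn
    rcases Nat.eq_zero_or_pos n with rfl | hn1
    · -- base case n = 1
      norm_num [List.range_succ, cfVal, Finset.sum_range_succ, Finset.Icc_self,
        show Finset.Icc 0 1 = {0, 1} from rfl, show Finset.Icc (1:ℕ) 0 = ∅ from rfl]
      have n1 : (g:ℚ) ≠ 0 := by positivity
      have n2 : 2*(f:ℚ)+(h:ℚ) ≠ 0 := by positivity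
      have n4 : (f:ℚ) + ((g:ℚ))⁻¹ ≠ 0 := by positivity
      have n5 : 2 * (g:ℚ) / (2 * (f:ℚ) + (h:ℚ)) * ((f:ℚ) * ((f:ℚ) + (h:ℚ) / 2)) + 1 ≠ 0 := by positivity
      field_simp
    · simp only [List.range_succ_eq_map, List.flatMap_cons, List.flatMap_map,
        List.cons_append, List.nil_append]
      have hfun : (fun a => [(f:ℚ) + (Nat.succ a : ℚ) * (h:ℚ), (g:ℚ) + (Nat.succ a : ℚ) * (k:ℚ)])
          = (fun i : ℕ => [((f+h : ℕ):ℚ) + (i:ℚ) * (h:ℚ), ((g+k : ℕ):ℚ) + (i:ℚ) * (k:ℚ)]) := by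
        funext a
        have e1 : (f:ℚ) + (Nat.succ a : ℚ) * (h:ℚ) = ((f+h : ℕ):ℚ) + (a:ℚ) * (h:ℚ) := by
          push_cast; ring
        have e2 : (g:ℚ) + (Nat.succ a : ℚ) * (k:ℚ) = ((g+k : ℕ):ℚ) + (a:ℚ) * (k:ℚ) := by
          push_cast; ring
        rw [e1, e2]
      rw [hfun]
      have hcond' : 2*(g+k)*h = k*(2*(f+h) + h) := by
        zify at hcond ⊢; linear_combination hcond
      simp only [cfVal]
      rw [IH (f+h) (g+k) k (by omega) (by omega) hk hcond' hn1]
      have hx : 2 * ((g + k : ℕ) : ℚ) / (2 * ((f + h : ℕ):ℚ) + (h:ℚ))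
          = 2*(g:ℚ)/(2*(f:ℚ)+(h:ℚ)) := by
        have hc : 2*(g:ℚ)*(h:ℚ) = (k:ℚ)*(2*(f:ℚ)+(h:ℚ)) := by exact_mod_cast hcond
        rw [div_eq_div_iff (by positivity) (by positivity)]
        push_cast
        linear_combination (-2:ℚ) * hc
      rw [hx]
      push_cast
      simp only [zero_mul, add_zero]
      rw [show n+1+1 = n+2 by omega]
      rw [sumD_succ (f:ℚ) (h:ℚ) (2*(g:ℚ)/(2*(f:ℚ)+(h:ℚ))) n hn1,
          sumN_succ (f:ℚ) (h:ℚ) (2*(g:ℚ)/(2*(f:ℚ)+(h:ℚ))) n hn1]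
      have hgX : 2*(g:ℚ)/(2*(f:ℚ)+(h:ℚ)) * ((f:ℚ) + (h:ℚ)/2) = (g:ℚ) := by
        have hne : 2*(f:ℚ)+(h:ℚ) > 0 := by positivity
        field_simp
      rw [hgX]
      exact assemble (f:ℚ) (g:ℚ) _ _ _ (by positivity) (by positivity) (by positivity)
        (sumN_pos ((f:ℚ)+(h:ℚ)) (h:ℚ) _ (by positivity) (by positivity) (by positivity) n hn1)
        (sumD_pos ((f:ℚ)+(h:ℚ)) (h:ℚ) _ (by positivity) (by positivity) (by positivity) n)
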